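/- Let (X,d) be a locally compact metric space whose space of connected components Σ(X) (with the quotient topology) is compact. Then there exist finitely many points x₁,…,x_m ∈ X and relatively compact open neighborhoods V_i of x_i such that the set F = {g ∈ I(X,d) : g x_i ∈ V_i for all i} has the property that F(x) is relatively compact for every x ∈ X. -/
import Mathlib

open Function Set Metric Topology
open scoped ENNReal NNReal

namespace Stmt3Aux

variable {X : Type*} [MetricSpace X]

/-- Radius of compactness: sup of radii of compact closed balls around `x`. -/
noncomputable def rho (x : X) : ℝ≥0∞ :=
  ⨆ (ε : ℝ≥0) (_ : IsCompact (Metric.closedBall x (ε : ℝ))), (ε : ℝ≥0∞)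

lemma le_rho {x : X} {ε : ℝ≥0} (h : IsCompact (Metric.closedBall x (ε : ℝ))) :
    (ε : ℝ≥0∞) ≤ rho x :=
  le_iSup₂ (f := fun (ε : ℝ≥0) (_ : IsCompact (Metric.closedBall x (ε : ℝ))) => (ε : ℝ≥0∞)) ε h

lemma isCompact_of_lt_rho {x : X} {ε : ℝ≥0} (h : (ε : ℝ≥0∞) < rho x) :
    IsCompact (Metric.closedBall x (ε : ℝ)) := by
  obtain ⟨ε', h'⟩ := lt_iSup_iff.mp h
  by_cases hc : IsCompact (Metric.closedBall x (ε' : ℝ))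
  · simp only [hc, iSup_pos] at h'
    exact hc.of_isClosed_subset Metric.isClosed_closedBall
      (Metric.closedBall_subset_closedBall (by exact_mod_cast h'.le))
  · simp [hc] at h'

lemma rho_pos [LocallyCompactSpace X] (x : X) : 0 < rho x := by
  obtain ⟨K, hK, hKn⟩ := exists_compact_mem_nhds x
  obtain ⟨ε, hε, hball⟩ := Metric.nhds_basis_closedBall.mem_iff.mp hKn
  have hc : IsCompact (Metric.closedBall x ((ε.toNNReal : ℝ≥0) : ℝ)) := by
    rw [Real.coe_toNNReal ε hε.le]
    exact hK.of_isClosed_subset Metric.isClosed_closedBall hball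
  calc (0 : ℝ≥0∞) < (ε.toNNReal : ℝ≥0∞) := by exact_mod_cast Real.toNNReal_pos.mpr hε
    _ ≤ rho x := le_rho hc

lemma rho_le_add (x y : X) : rho x ≤ rho y + edist y x := by
  refine iSup₂_le fun ε hε => ?_
  rcases le_or_gt ε (nndist y x) with h | h
  · calc (ε : ℝ≥0∞) ≤ (nndist y x : ℝ≥0∞) := by exact_mod_cast h
      _ = edist y x := (edist_nndist y x).symm
      _ ≤ rho y + edist y x := le_add_self
  · have hsub : Metric.closedBall y ((ε - nndist y x : ℝ≥0) : ℝ) ⊆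
        Metric.closedBall x (ε : ℝ) := by
      intro z hz
      simp only [Metric.mem_closedBall] at hz ⊢
      have ht := dist_triangle z y x
      have hc : ((ε - nndist y x : ℝ≥0) : ℝ) = (ε : ℝ) - dist y x := by
        rw [NNReal.coe_sub h.le, coe_nndist]
      rw [hc] at hz
      linarith
    have hcomp : IsCompact (Metric.closedBall y ((ε - nndist y x : ℝ≥0) : ℝ)) :=
      hε.of_isClosed_subset Metric.isClosed_closedBall hsub
    calc (ε : ℝ≥0∞) = ((ε - nndist y x : ℝ≥0) : ℝ≥0∞) + (nndist y x : ℝ≥0∞) := by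
          rw [← ENNReal.coe_add, tsub_add_cancel_of_le h.le]
      _ ≤ rho y + edist y x := by
          rw [edist_nndist]
          exact add_le_add (le_rho hcomp) le_rfl

lemma rho_map {g : X → X} (hg : Isometry g) (hs : Surjective g) (x : X) :
    rho (g x) = rho x := by
  let e : X ≃ᵢ X := ⟨Equiv.ofBijective g ⟨hg.injective, hs⟩, hg⟩
  have key : ∀ ε : ℝ≥0, IsCompact (Metric.closedBall (g x) (ε : ℝ)) ↔
      IsCompact (Metric.closedBall x (ε : ℝ)) := by
    intro ε
    have hex : e x = g x := rfl
    have him : ⇑e '' Metric.closedBall x (ε : ℝ) = Metric.closedBall (g x) (ε : ℝ) := by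
      rw [e.image_closedBall, hex]
    rw [← him]
    exact e.toHomeomorph.isCompact_image
  refine le_antisymm (iSup₂_le fun ε hε => le_rho ((key ε).mp hε))
    (iSup₂_le fun ε hε => le_rho ((key ε).mpr hε))

/-- One chain step. -/
def stepRel (y z : X) : Prop := edist y z < rho y / 2

lemma orbit_step {F : Set (X → X)} (hF : ∀ g ∈ F, Isometry g ∧ Surjective g)
    {y z : X} (hyz : edist y z < rho y)
    (hy : IsCompact (closure ((fun g => g y) '' F))) :
    IsCompact (closure ((fun g => g z) '' F)) := by
  set K := closure ((fun g => g y) '' F) with hK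
  -- every point of K has rho at least rho y
  have hρK : ∀ w ∈ K, rho y ≤ rho w := by
    intro w hw
    refine ENNReal.le_of_forall_pos_le_add fun η hη _ => ?_
    obtain ⟨p, hp, hwp⟩ := EMetric.mem_closure_iff.mp hw (η : ℝ≥0∞) (by exact_mod_cast hη)
    obtain ⟨g, hg, rfl⟩ := hp
    calc rho y = rho (g y) := (rho_map (hF g hg).1 (hF g hg).2 y).symm
      _ ≤ rho w + edist w (g y) := rho_le_add (g y) w
      _ ≤ rho w + (η : ℝ≥0∞) := add_le_add le_rfl hwp.le
  set d : ℝ≥0 := nndist y z with hd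
  have hdρ : (d : ℝ≥0∞) < rho y := by rw [hd, ← edist_nndist]; exact hyz
  -- for each w in K choose a compact ball of radius > d
  have hch : ∀ w ∈ K, ∃ r : ℝ≥0, d < r ∧ IsCompact (Metric.closedBall w (r : ℝ)) := by
    intro w hw
    obtain ⟨r, hr1, hr2⟩ := ENNReal.lt_iff_exists_nnreal_btwn.mp (lt_of_lt_of_le hdρ (hρK w hw))
    exact ⟨r, by exact_mod_cast hr1, isCompact_of_lt_rho hr2⟩
  choose! r hrd hrc using hch
  -- cover K by balls of radius r w - d
  obtain ⟨t, ht⟩ := hy.elim_nhds_subcover' (fun w hw => Metric.ball w ((r w - d : ℝ≥0) : ℝ))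
    (fun w hw => Metric.ball_mem_nhds w (by exact_mod_cast tsub_pos_of_lt (hrd w hw)))
  have hTc : IsCompact (⋃ w ∈ t, Metric.closedBall (w : X) (r w : ℝ)) :=
    t.isCompact_biUnion fun w _ => hrc w w.2
  have hTcl : IsClosed (⋃ w ∈ t, Metric.closedBall (w : X) (r w : ℝ)) := hTc.isClosed
  have hsub : (fun g => g z) '' F ⊆ ⋃ w ∈ t, Metric.closedBall (w : X) (r w : ℝ) := by
    rintro _ ⟨g, hg, rfl⟩
    have hgy : g y ∈ K := subset_closure (mem_image_of_mem _ hg)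
    obtain ⟨w, hwt, hgyw⟩ := mem_iUnion₂.mp (ht hgy)
    refine mem_iUnion₂.mpr ⟨w, hwt, ?_⟩
    simp only [Metric.mem_ball] at hgyw
    simp only [Metric.mem_closedBall]
    have h1 : dist (g z) (g y) = dist z y := (hF g hg).1.dist_eq z y
    have h2 : dist z y = (d : ℝ) := by rw [hd, coe_nndist, dist_comm]
    have h3 : ((r w - d : ℝ≥0) : ℝ) = (r w : ℝ) - (d : ℝ) :=
      NNReal.coe_sub (hrd w w.2).le
    calc dist (g z) (w : X) ≤ dist (g z) (g y) + dist (g y) (w : X) := dist_triangle _ _ _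
      _ ≤ (d : ℝ) + ((r w : ℝ) - (d : ℝ)) := by
          rw [h1, h2]; exact add_le_add le_rfl (by rw [← h3]; exact hgyw.le)
      _ = (r w : ℝ) := by ring
  exact hTc.of_isClosed_subset isClosed_closure (closure_minimal hsub hTcl)

lemma orbit_iff {F : Set (X → X)} (hF : ∀ g ∈ F, Isometry g ∧ Surjective g)
    {a b : X} (h : Relation.EqvGen stepRel a b) :
    (IsCompact (closure ((fun g => g a) '' F)) ↔
      IsCompact (closure ((fun g => g b) '' F))) := by
  induction h with
  | rel a b hab =>
    constructor
    · exact fun ha => orbit_step hF (lt_of_lt_of_le hab (ENNReal.half_le_self)) ha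
    · intro hb
      refine orbit_step hF ?_ hb
      rw [edist_comm]
      by_contra hcon
      push_neg at hcon
      have h1 : rho a ≤ rho b + edist b a := rho_le_add a b
      have h2 : edist b a = edist a b := edist_comm b a
      have h3 : rho a ≤ edist a b + edist a b := by
        calc rho a ≤ rho b + edist b a := h1
          _ ≤ edist a b + edist a b := by rw [h2]; exact add_le_add hcon le_rfl
      have h4 : edist a b + edist a b < rho a := by
        calc edist a b + edist a b < rho a / 2 + rho a / 2 := ENNReal.add_lt_add hab hab
          _ = rho a := ENNReal.add_halves _
      exact absurd (lt_of_le_of_lt h3 h4) (lt_irrefl _)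
  | refl a => exact Iff.rfl
  | symm a b _ ih => exact ih.symm
  | trans a b c _ _ ih1 ih2 => exact ih1.trans ih2

/-- The pseudo-component of `x`. -/
def pc (x : X) : Set X := {y | Relation.EqvGen stepRel x y}

lemma mem_pc_self (x : X) : x ∈ pc x := Relation.EqvGen.refl x

lemma isClopen_pc [LocallyCompactSpace X] (x : X) : IsClopen (pc x) := by
  constructor
  · -- closed: complement open
    rw [← isOpen_compl_iff]
    rw [isOpen_iff_mem_nhds]
    intro y hy
    have hpos : 0 < rho y / 2 := ENNReal.half_pos (rho_pos y).ne'
    filter_upwards [EMetric.ball_mem_nhds y hpos] with z hz hxz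
    apply hy
    have hyz : stepRel y z := by
      rw [EMetric.mem_ball, edist_comm] at hz
      exact hz
    exact (Relation.EqvGen.trans _ _ _ hxz (Relation.EqvGen.symm _ _ (Relation.EqvGen.rel _ _ hyz)))
  · rw [isOpen_iff_mem_nhds]
    intro y hy
    have hpos : 0 < rho y / 2 := ENNReal.half_pos (rho_pos y).ne'
    filter_upwards [EMetric.ball_mem_nhds y hpos] with z hz
    have hyz : stepRel y z := by
      rw [EMetric.mem_ball, edist_comm] at hz
      exact hz
    exact Relation.EqvGen.trans _ _ _ hy (Relation.EqvGen.rel _ _ hyz)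

lemma pc_trans {x y : X} (h : y ∈ pc x) : pc y ⊆ pc x := fun _ hz => Relation.EqvGen.trans _ _ _ h hz

lemma sat_pc [LocallyCompactSpace X] (x : X) :
    ConnectedComponents.mk ⁻¹' (ConnectedComponents.mk '' pc x) = pc x := by
  apply Subset.antisymm
  · rintro y hy
    obtain ⟨y', hy', hqy⟩ := hy
    rw [ConnectedComponents.coe_eq_coe] at hqy
    have : y ∈ connectedComponent y' := hqy ▸ mem_connectedComponent
    exact pc_trans hy' ((isClopen_pc y').connectedComponent_subset (mem_pc_self y') this)
  · exact subset_preimage_image _ _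

end Stmt3Aux

open Stmt3Aux

theorem stmt_3 {X : Type*} [MetricSpace X] [LocallyCompactSpace X]
    [CompactSpace (ConnectedComponents X)] :
    ∃ (m : ℕ) (x : Fin m → X) (V : Fin m → Set X),
      (∀ i, IsOpen (V i) ∧ x i ∈ V i ∧ IsCompact (closure (V i))) ∧
      ∀ y : X, IsCompact (closure
        ((fun g => g y) ''
          {g : X → X | (Isometry g ∧ Surjective g) ∧ ∀ i, g (x i) ∈ V i})) := by
  classical
  have hopen : ∀ x : X, IsOpen (ConnectedComponents.mk '' pc x) := by
    intro x
    rw [← ConnectedComponents.isQuotientMap_coe.isOpen_preimage, sat_pc]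
    exact (isClopen_pc x).2
  have hcov : (univ : Set (ConnectedComponents X)) ⊆
      ⋃ x : X, ConnectedComponents.mk '' pc x := by
    rintro c -
    obtain ⟨y, rfl⟩ := ConnectedComponents.surjective_coe c
    exact mem_iUnion.mpr ⟨y, mem_image_of_mem _ (mem_pc_self y)⟩
  obtain ⟨t, ht⟩ := isCompact_univ.elim_finite_subcover _ hopen hcov
  set m := t.card with hm
  set e := t.equivFin with he
  set x : Fin m → X := fun i => ((e.symm i : t) : X) with hx
  have hr : ∀ i : Fin m, ∃ r : ℝ≥0, 0 < r ∧ (r : ℝ≥0∞) < rho (x i) := by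
    intro i
    obtain ⟨r, hr1, hr2⟩ := ENNReal.lt_iff_exists_nnreal_btwn.mp (rho_pos (x i))
    exact ⟨r, by exact_mod_cast hr1, hr2⟩
  choose r hr0 hrρ using hr
  refine ⟨m, x, fun i => Metric.ball (x i) (r i : ℝ), fun i => ⟨Metric.isOpen_ball,
    Metric.mem_ball_self (by exact_mod_cast hr0 i),
    (isCompact_of_lt_rho (hrρ i)).of_isClosed_subset isClosed_closure
      closure_ball_subset_closedBall⟩, ?_⟩
  intro y
  set F : Set (X → X) :=
    {g : X → X | (Isometry g ∧ Surjective g) ∧ ∀ i, g (x i) ∈ Metric.ball (x i) (r i : ℝ)}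
    with hF
  have hFiso : ∀ g ∈ F, Isometry g ∧ Surjective g := fun g hg => hg.1
  -- find the pseudo-component containing y
  have hyc : (ConnectedComponents.mk y : ConnectedComponents X) ∈
      ⋃ x₀ ∈ t, ConnectedComponents.mk '' pc x₀ := ht (mem_univ _)
  obtain ⟨x₀, hx₀t, hyx₀⟩ := mem_iUnion₂.mp hyc
  have hy : y ∈ pc x₀ := by rw [← sat_pc x₀]; exact hyx₀
  set i : Fin m := e ⟨x₀, hx₀t⟩ with hi
  have hxi : x i = x₀ := by
    show ((e.symm (e ⟨x₀, hx₀t⟩) : t) : X) = x₀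
    rw [Equiv.symm_apply_apply]
  have hbase : IsCompact (closure ((fun g => g (x i)) '' F)) := by
    have hsub : (fun g => g (x i)) '' F ⊆ Metric.ball (x i) (r i : ℝ) := by
      rintro _ ⟨g, hg, rfl⟩
      exact hg.2 i
    exact (isCompact_of_lt_rho (hrρ i)).of_isClosed_subset isClosed_closure
      (closure_minimal (hsub.trans Metric.ball_subset_closedBall) Metric.isClosed_closedBall)
  exact (orbit_iff hFiso (hxi ▸ hy : Relation.EqvGen stepRel (x i) y)).mp hbase
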